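/- Let F be a PCAF, C a set of claims, i ∈ {2,3,4}, and σ ∈ {prf, sem}. Then C ∈ σ_p^i(F) if and only if claim(E_*^i(C)) = C and E_*^i(C) ∈ σ(Red_i(F)). In particular, if claim(E_*^i(C)) = C but E_*^i(C) is not a preferred (respectively semi-stable) extension of Red_i(F), then no preferred (respectively semi-stable) extension S of Red_i(F) satisfies claim(S) = C. -/

import Mathlib

/-- A claim-augmented argumentation framework (CAF): a finite set of arguments,
an attack relation between the arguments, and a claim function assigning
a claim to each argument.  Arguments and claims are drawn from `ℕ`. -/
structure CAF where
  args : Finset ℕ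
  att : Set (ℕ × ℕ)
  claim : ℕ → ℕ
  att_dom : ∀ p ∈ att, p.1 ∈ args ∧ p.2 ∈ args

namespace CAF

/-- A CAF is well-formed if arguments with the same claim attack the same arguments. -/
def wf (F : CAF) : Prop :=
  ∀ a ∈ F.args, ∀ b ∈ F.args, F.claim a = F.claim b →
    ∀ c, ((a, c) ∈ F.att ↔ (b, c) ∈ F.att)

/-- `S` attacks the argument `b` in `F`. -/
def attacks (F : CAF) (S : Set ℕ) (b : ℕ) : Prop := ∃ a ∈ S, (a, b) ∈ F.att

/-- The argument `a` is defended by `S` in `F`. -/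
def defends (F : CAF) (S : Set ℕ) (a : ℕ) : Prop :=
  ∀ b, (b, a) ∈ F.att → F.attacks S b

/-- The range `S⊕` of `S` in `F`. -/
def range (F : CAF) (S : Set ℕ) : Set ℕ := S ∪ {b | F.attacks S b}

/-- Conflict-free sets. -/
def cf (F : CAF) (S : Set ℕ) : Prop :=
  S ⊆ ↑F.args ∧ ∀ a ∈ S, ∀ b ∈ S, (a, b) ∉ F.att

/-- Admissible sets. -/
def adm (F : CAF) (S : Set ℕ) : Prop :=
  F.cf S ∧ ∀ a ∈ S, F.defends S a

/-- Complete extensions. -/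
def com (F : CAF) (S : Set ℕ) : Prop :=
  F.adm S ∧ ∀ a ∈ F.args, F.defends S a → a ∈ S

/-- Naive extensions: ⊆-maximal conflict-free sets. -/
def naive (F : CAF) (S : Set ℕ) : Prop :=
  F.cf S ∧ ¬ ∃ T, F.cf T ∧ S ⊂ T

/-- Stable extensions. -/
def stb (F : CAF) (S : Set ℕ) : Prop :=
  F.cf S ∧ ∀ a ∈ F.args, a ∉ S → F.attacks S a

/-- Preferred extensions: ⊆-maximal admissible sets. -/
def prf (F : CAF) (S : Set ℕ) : Prop :=
  F.adm S ∧ ¬ ∃ T, F.adm T ∧ S ⊂ T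

/-- Semi-stable extensions: admissible sets with ⊆-maximal range among admissible sets. -/
def sem (F : CAF) (S : Set ℕ) : Prop :=
  F.adm S ∧ ¬ ∃ T, F.adm T ∧ F.range S ⊂ F.range T

/-- Stage extensions: conflict-free sets with ⊆-maximal range among conflict-free sets. -/
def stg (F : CAF) (S : Set ℕ) : Prop :=
  F.cf S ∧ ¬ ∃ T, F.cf T ∧ F.range S ⊂ F.range T

/-- The claim-based variant `σ_c` of a semantics `σ`. -/
def claimSem (σ : CAF → Set ℕ → Prop) (F : CAF) : Set (Set ℕ) :=
  {C | ∃ S, σ F S ∧ F.claim '' S = C}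

/-- The wf-problematic part of a CAF: the pairs of arguments `(a,b)` such that
`(a,b)` is not an attack but some argument `a'` with the same claim as `a` attacks `b`. -/
def wfp (F : CAF) : Set (ℕ × ℕ) :=
  {p | p.1 ∈ F.args ∧ p.2 ∈ F.args ∧ p ∉ F.att ∧
       ∃ a' ∈ F.args, F.claim a' = F.claim p.1 ∧ (a', p.2) ∈ F.att}

end CAF

/-- A preference-based CAF (PCAF): a well-formed CAF together with an
asymmetric preference relation over its arguments. -/
structure PCAF extends CAF where
  pref : ℕ → ℕ → Prop
  pref_dom : ∀ a b, pref a b → a ∈ args ∧ b ∈ args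
  pref_asymm : ∀ a b, pref a b → ¬ pref b a
  isWf : toCAF.wf

/-- The attack relation obtained from a PCAF by Reduction `i` (`i ∈ {1,2,3,4}`). -/
def redAtt (i : ℕ) (F : PCAF) : Set (ℕ × ℕ) :=
  if i = 1 then {p | p ∈ F.att ∧ ¬ F.pref p.2 p.1}
  else if i = 2 then
    {p | (p ∈ F.att ∧ ¬ F.pref p.2 p.1) ∨
         ((p.2, p.1) ∈ F.att ∧ p ∉ F.att ∧ F.pref p.1 p.2)}
  else if i = 3 then
    {p | (p ∈ F.att ∧ ¬ F.pref p.2 p.1) ∨ (p ∈ F.att ∧ (p.2, p.1) ∉ F.att)}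
  else if i = 4 then
    {p | (p ∈ F.att ∧ ¬ F.pref p.2 p.1) ∨
         ((p.2, p.1) ∈ F.att ∧ p ∉ F.att ∧ F.pref p.1 p.2) ∨
         (p ∈ F.att ∧ (p.2, p.1) ∉ F.att)}
  else ∅

/-- The CAF `Red_i(F)` obtained from the PCAF `F` by Reduction `i`. -/
def Red (i : ℕ) (F : PCAF) : CAF where
  args := F.args
  att := redAtt i F
  claim := F.claim
  att_dom := by
    intro p hp
    unfold redAtt at hp
    split_ifs at hp
    · simp only [Set.mem_setOf_eq] at hp
      exact F.att_dom p hp.1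
    · simp only [Set.mem_setOf_eq] at hp
      rcases hp with ⟨h, -⟩ | ⟨h, -, -⟩
      · exact F.att_dom p h
      · exact ⟨(F.att_dom _ h).2, (F.att_dom _ h).1⟩
    · simp only [Set.mem_setOf_eq] at hp
      rcases hp with ⟨h, -⟩ | ⟨h, -⟩ <;> exact F.att_dom p h
    · simp only [Set.mem_setOf_eq] at hp
      rcases hp with ⟨h, -⟩ | ⟨h, -, -⟩ | ⟨h, -⟩
      · exact F.att_dom p h
      · exact ⟨(F.att_dom _ h).2, (F.att_dom _ h).1⟩
      · exact F.att_dom p h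
    · exact absurd hp (Set.notMem_empty p)

/-- `Image_i`: the class of CAFs obtainable by applying Reduction `i` to a PCAF. -/
def ImageI (i : ℕ) : Set CAF := {F | ∃ G : PCAF, Red i G = F}

/-- `ImageTrans_i`: the class of CAFs obtainable by applying Reduction `i`
to a PCAF with a transitive preference relation. -/
def ImageTransI (i : ℕ) : Set CAF :=
  {F | ∃ G : PCAF, Transitive G.pref ∧ Red i G = F}

/-- The class of well-formed CAFs. -/
def wfCAFs : Set CAF := {F | F.wf}

/-- The preference-claim-based variant `σ_p^i` of a semantics `σ`. -/
def prefSem (σ : CAF → Set ℕ → Prop) (i : ℕ) (F : PCAF) : Set (Set ℕ) :=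
  CAF.claimSem σ (Red i F)

/-- `E_0(C)`: all arguments of `F` with a claim in `C`. -/
def E0 (F : PCAF) (C : Set ℕ) : Set ℕ := {a | a ∈ F.args ∧ F.claim a ∈ C}

/-- `E_1^i(C)`: the arguments of `E_0(C)` not attacked by `E_0(C)` in the
underlying AF of `F` (this set does not depend on `i`). -/
def E1 (F : PCAF) (C : Set ℕ) : Set ℕ :=
  E0 F C \ {b | ∃ a ∈ E0 F C, (a, b) ∈ F.att}

/-- The sequence `E_k^i(C)`. -/
def Ek (F : PCAF) (i : ℕ) (C : Set ℕ) : ℕ → Set ℕ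
  | 0 => E0 F C
  | 1 => E1 F C
  | (k + 2) => {x | x ∈ Ek F i C (k + 1) ∧ (Red i F).defends (Ek F i C (k + 1)) x}

/-- `E_*^i(C)`: the fixed point of the sequence `E_k^i(C)` (reached after at
most `|A|` steps, since the sequence is ⊆-decreasing from index 1 on). -/
def Estar (F : PCAF) (i : ℕ) (C : Set ℕ) : Set ℕ := Ek F i C (F.args.card + 2)

section Stmt17Aux

lemma defends_mono (G : CAF) {S T : Set ℕ} {x : ℕ} (h : S ⊆ T) (hd : G.defends S x) :
    G.defends T x := by
  intro b hb
  obtain ⟨a, ha, hab⟩ := hd b hb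
  exact ⟨a, h ha, hab⟩

lemma range_mono (G : CAF) {S T : Set ℕ} (h : S ⊆ T) : G.range S ⊆ G.range T := by
  rintro x (hx | ⟨a, ha, hab⟩)
  · exact Or.inl (h hx)
  · exact Or.inr ⟨a, h ha, hab⟩

variable (F : PCAF) (C : Set ℕ) (i : ℕ)

lemma mem_redAtt2 {a b : ℕ} : (a, b) ∈ redAtt 2 F ↔
    ((a, b) ∈ F.att ∧ ¬ F.pref b a) ∨ ((b, a) ∈ F.att ∧ (a, b) ∉ F.att ∧ F.pref a b) := by
  simp [redAtt]

lemma mem_redAtt3 {a b : ℕ} : (a, b) ∈ redAtt 3 F ↔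
    ((a, b) ∈ F.att ∧ ¬ F.pref b a) ∨ ((a, b) ∈ F.att ∧ (b, a) ∉ F.att) := by
  simp [redAtt]

lemma mem_redAtt4 {a b : ℕ} : (a, b) ∈ redAtt 4 F ↔
    ((a, b) ∈ F.att ∧ ¬ F.pref b a) ∨ ((b, a) ∈ F.att ∧ (a, b) ∉ F.att ∧ F.pref a b) ∨
    ((a, b) ∈ F.att ∧ (b, a) ∉ F.att) := by
  simp [redAtt]

lemma redAtt_of_att (hi : i = 2 ∨ i = 3 ∨ i = 4) {a b : ℕ} (hab : (a, b) ∈ F.att) :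
    (a, b) ∈ redAtt i F ∨ (b, a) ∈ redAtt i F := by
  have h1 := F.pref_asymm a b
  have h2 := F.pref_asymm b a
  rcases hi with rfl | rfl | rfl
  · rw [mem_redAtt2, mem_redAtt2]
    by_cases hp : F.pref b a <;> by_cases hr : (b, a) ∈ F.att <;> tauto
  · rw [mem_redAtt3, mem_redAtt3]
    by_cases hp : F.pref b a <;> by_cases hr : (b, a) ∈ F.att <;> tauto
  · rw [mem_redAtt4, mem_redAtt4]
    by_cases hp : F.pref b a <;> by_cases hr : (b, a) ∈ F.att <;> tauto

lemma att_of_redAtt (hi : i = 2 ∨ i = 3 ∨ i = 4) {a b : ℕ}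
    (h : (a, b) ∈ redAtt i F) : (a, b) ∈ F.att ∨ (b, a) ∈ F.att := by
  rcases hi with rfl | rfl | rfl
  · rw [mem_redAtt2] at h; tauto
  · rw [mem_redAtt3] at h; tauto
  · rw [mem_redAtt4] at h; tauto


lemma E0_subset_args : E0 F C ⊆ ↑F.args := fun _ h => h.1

lemma E1_subset_E0 : E1 F C ⊆ E0 F C := fun _ h => h.1

lemma Ek_succ_subset (k : ℕ) : Ek F i C (k + 2) ⊆ Ek F i C (k + 1) := fun _ h => h.1

lemma Ek_subset_E1 (k : ℕ) : Ek F i C (k + 1) ⊆ E1 F C := by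
  induction k with
  | zero => exact fun _ h => h
  | succ k ih => exact fun x hx => ih hx.1

lemma E1_cf (hi : i = 2 ∨ i = 3 ∨ i = 4) : (Red i F).cf (E1 F C) := by
  constructor
  · exact fun x hx => hx.1.1
  · intro a ha b hb hab
    rcases att_of_redAtt F i hi hab with h | h
    · exact hb.2 ⟨a, ha.1, h⟩
    · exact ha.2 ⟨b, hb.1, h⟩

lemma Estar_subset_E1 : Estar F i C ⊆ E1 F C := Ek_subset_E1 F C i _

lemma Estar_cf (hi : i = 2 ∨ i = 3 ∨ i = 4) : (Red i F).cf (Estar F i C) := by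
  obtain ⟨h1, h2⟩ := E1_cf F C i hi
  exact ⟨fun x hx => h1 (Estar_subset_E1 F C i hx),
    fun a ha b hb => h2 a (Estar_subset_E1 F C i ha) b (Estar_subset_E1 F C i hb)⟩

lemma Ek_const {k : ℕ} (h : Ek F i C (k + 1) = Ek F i C (k + 2)) :
    ∀ m, Ek F i C (k + 1 + m) = Ek F i C (k + 1) := by
  intro m
  induction m with
  | zero => rfl
  | succ m ih =>
    have e : k + 1 + (m + 1) = (k + m) + 2 := by omega
    rw [e]
    show {x | x ∈ Ek F i C (k + m + 1) ∧ (Red i F).defends (Ek F i C (k + m + 1)) x}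
        = Ek F i C (k + 1)
    have e2 : k + m + 1 = k + 1 + m := by omega
    rw [e2, ih]
    conv_rhs => rw [h]
    rfl

lemma exists_fix : ∃ k ≤ F.args.card + 1, Ek F i C (k + 1) = Ek F i C (k + 2) := by
  by_contra hcon
  push_neg at hcon
  have hfin : ∀ k : ℕ, (Ek F i C (k + 1)).Finite := fun k =>
    F.args.finite_toSet.subset (fun x hx => (Ek_subset_E1 F C i k hx).1.1)
  have hstrict : ∀ k ≤ F.args.card + 1,
      (Ek F i C (k + 2)).ncard < (Ek F i C (k + 1)).ncard := by
    intro k hk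
    exact Set.ncard_lt_ncard
      ((Ek_succ_subset F C i k).ssubset_of_ne (Ne.symm (hcon k hk))) (hfin k)
  have hle : ∀ k ≤ F.args.card + 2, (Ek F i C (k + 1)).ncard + k ≤ (Ek F i C 1).ncard := by
    intro k hk
    induction k with
    | zero => simp
    | succ k ih =>
      have h1 := hstrict k (by omega)
      have h2 := ih (by omega)
      have e : Ek F i C (k + 1 + 1) = Ek F i C (k + 2) := rfl
      rw [e]
      omega
  have h0 : (Ek F i C 1).ncard ≤ F.args.card := by
    calc (Ek F i C 1).ncard ≤ (↑F.args : Set ℕ).ncard :=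
          Set.ncard_le_ncard (fun x hx => (Ek_subset_E1 F C i 0 hx).1.1) F.args.finite_toSet
      _ = F.args.card := Set.ncard_coe_finset _
  have := hle (F.args.card + 2) le_rfl
  omega

lemma Estar_defends : ∀ x ∈ Estar F i C, (Red i F).defends (Estar F i C) x := by
  obtain ⟨k, hk, hfix⟩ := exists_fix F C i
  have hconst := Ek_const F C i hfix
  have h1 : Estar F i C = Ek F i C (k + 1) := by
    show Ek F i C (F.args.card + 2) = _
    rw [show F.args.card + 2 = k + 1 + (F.args.card + 1 - k) from by omega, hconst]
  intro x hx
  rw [h1] at hx ⊢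
  rw [hfix] at hx
  exact hx.2

lemma Estar_adm (hi : i = 2 ∨ i = 3 ∨ i = 4) : (Red i F).adm (Estar F i C) :=
  ⟨Estar_cf F C i hi, Estar_defends F C i⟩

lemma claim_Estar_subset : F.claim '' Estar F i C ⊆ C := by
  rintro c ⟨x, hx, rfl⟩
  exact (Estar_subset_E1 F C i hx).1.2

lemma subset_Estar (hi : i = 2 ∨ i = 3 ∨ i = 4) {S : Set ℕ}
    (hadm : (Red i F).adm S) (hC : F.claim '' S = C) : S ⊆ Estar F i C := by
  have hargs : S ⊆ ↑F.args := hadm.1.1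
  have hE0 : S ⊆ E0 F C := by
    intro x hx
    exact ⟨hargs hx, hC ▸ ⟨x, hx, rfl⟩⟩
  have hE1 : S ⊆ E1 F C := by
    intro b hb
    refine ⟨hE0 hb, ?_⟩
    rintro ⟨a, haE0, hab⟩
    have : F.claim a ∈ F.claim '' S := hC.symm ▸ haE0.2
    obtain ⟨a', ha'S, ha'claim⟩ := this
    have hab' : (a', b) ∈ F.att :=
      (F.isWf a' (hargs ha'S) a haE0.1 ha'claim b).mpr hab
    rcases redAtt_of_att F i hi hab' with h | h
    · exact hadm.1.2 a' ha'S b hb h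
    · exact hadm.1.2 b hb a' ha'S h
  have hEk : ∀ k, S ⊆ Ek F i C (k + 1) := by
    intro k
    induction k with
    | zero => exact hE1
    | succ k ih =>
      intro x hx
      exact ⟨ih hx, defends_mono (Red i F) ih (hadm.2 x hx)⟩
  exact hEk _

end Stmt17Aux

/-- For `i ∈ {2,3,4}` and `σ ∈ {prf, sem}`: `C ∈ σ_p^i(F)` iff
`claim(E_*^i(C)) = C` and `E_*^i(C) ∈ σ(Red_i(F))`.  In particular, if
`claim(E_*^i(C)) = C` but `E_*^i(C)` is not a preferred (resp. semi-stable)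
extension of `Red_i(F)`, then no preferred (resp. semi-stable) extension `S` of
`Red_i(F)` satisfies `claim(S) = C`. -/
theorem stmt_17 (F : PCAF) (C : Set ℕ) :
    ∀ i ∈ ({2, 3, 4} : Set ℕ),
      ∀ σ ∈ ({CAF.prf, CAF.sem} : Set (CAF → Set ℕ → Prop)),
        (C ∈ prefSem σ i F ↔
          (F.claim '' Estar F i C = C ∧ σ (Red i F) (Estar F i C))) ∧
        ((F.claim '' Estar F i C = C ∧ ¬ σ (Red i F) (Estar F i C)) →
          ∀ S : Set ℕ, σ (Red i F) S → F.claim '' S ≠ C) := by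
  intro i hi σ hσ
  have hi' : i = 2 ∨ i = 3 ∨ i = 4 := by simpa using hi
  have hσ' : σ = CAF.prf ∨ σ = CAF.sem := by simpa using hσ
  have key : ∀ S : Set ℕ, σ (Red i F) S → F.claim '' S = C →
      F.claim '' Estar F i C = C ∧ σ (Red i F) (Estar F i C) := by
    intro S hσS hCS
    have hadmS : (Red i F).adm S := by
      rcases hσ' with rfl | rfl
      · exact hσS.1
      · exact hσS.1
    have hsub : S ⊆ Estar F i C := subset_Estar F C i hi' hadmS hCS
    have hadmE : (Red i F).adm (Estar F i C) := Estar_adm F C i hi'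
    have hclaim : F.claim '' Estar F i C = C := by
      apply Set.Subset.antisymm (claim_Estar_subset F C i)
      intro c hc
      rw [← hCS] at hc
      obtain ⟨x, hx, rfl⟩ := hc
      exact ⟨x, hsub hx, rfl⟩
    refine ⟨hclaim, ?_⟩
    rcases hσ' with rfl | rfl
    · have hSE : S = Estar F i C := by
        by_contra hne
        exact hσS.2 ⟨Estar F i C, hadmE, hsub.ssubset_of_ne hne⟩
      rw [← hSE]; exact hσS
    · have hrange : (Red i F).range S = (Red i F).range (Estar F i C) := by
        by_contra hne
        exact hσS.2 ⟨Estar F i C, hadmE, (range_mono _ hsub).ssubset_of_ne hne⟩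
      exact ⟨hadmE, fun ⟨T, hT, hlt⟩ => hσS.2 ⟨T, hT, hrange ▸ hlt⟩⟩
  constructor
  · constructor
    · rintro ⟨S, hσS, hCS⟩
      exact key S hσS hCS
    · rintro ⟨hclaim, hE⟩
      exact ⟨Estar F i C, hE, hclaim⟩
  · rintro ⟨hclaim, hnot⟩ S hσS hCS
    exact hnot (key S hσS hCS).2
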